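/- Let U be an m×ℓ real matrix with orthonormal columns (U^T U = I_ℓ). Then the function Σ ↦ -log det(U^T Σ^{-1} U) is concave on the cone of m×m real positive definite matrices. -/

import Mathlib

set_option linter.unusedSectionVars false

section AuxHelpers

open Matrix Finset

variable {n l : Type*} [Fintype n] [Fintype l] [DecidableEq n] [DecidableEq l]

lemma aux_psd_smul {A : Matrix n n ℝ} (hA : A.PosSemidef) {c : ℝ} (hc : 0 ≤ c) :
    (c • A).PosSemidef := by
  refine Matrix.PosSemidef.of_dotProduct_mulVec_nonneg ?_ fun x => ?_
  · unfold Matrix.IsHermitian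
    rw [conjTranspose_smul, hA.1]
    simp
  · rw [smul_mulVec, dotProduct_smul]
    exact mul_nonneg hc (hA.dotProduct_mulVec_nonneg x)

lemma aux_pd_smul {A : Matrix n n ℝ} (hA : A.PosDef) {c : ℝ} (hc : 0 < c) :
    (c • A).PosDef := by
  refine Matrix.PosDef.of_dotProduct_mulVec_pos ?_ fun x hx => ?_
  · unfold Matrix.IsHermitian
    rw [conjTranspose_smul, hA.1]
    simp
  · rw [smul_mulVec, dotProduct_smul]
    exact mul_pos hc (hA.dotProduct_mulVec_pos hx)

lemma aux_pd_combo {A B : Matrix n n ℝ} (hA : A.PosDef) (hB : B.PosDef) {t : ℝ}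
    (ht0 : 0 ≤ t) (ht1 : t ≤ 1) : (t • A + (1 - t) • B).PosDef := by
  rcases eq_or_lt_of_le ht0 with h | h
  · simpa [← h] using hB
  · exact (aux_pd_smul hA h).add_posSemidef (aux_psd_smul hB.posSemidef (by linarith))

lemma aux_psd_conj {A : Matrix n n ℝ} (hA : A.PosSemidef) (B : Matrix n l ℝ) :
    (Bᵀ * A * B).PosSemidef := by
  simpa [conjTranspose_eq_transpose_of_trivial] using hA.conjTranspose_mul_mul_same B

lemma aux_pd_conj {A : Matrix n n ℝ} (hA : A.PosDef) (B : Matrix n l ℝ)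
    (hB : ∀ x : l → ℝ, x ≠ 0 → B *ᵥ x ≠ 0) : (Bᵀ * A * B).PosDef := by
  refine Matrix.PosDef.of_dotProduct_mulVec_pos (aux_psd_conj hA.posSemidef B).1 fun x hx => ?_
  have : (Bᵀ * A * B) *ᵥ x = Bᵀ *ᵥ (A *ᵥ (B *ᵥ x)) := by
    simp [mulVec_mulVec, Matrix.mul_assoc]
  rw [this]
  have hsx : star x = x := by simp
  rw [hsx, dotProduct_mulVec, vecMul_transpose]
  have := hA.dotProduct_mulVec_pos (hB x hx)
  simpa using this

lemma aux_det_smul_one_add_smul {M : Matrix n n ℝ} (hM : M.IsHermitian) (a b : ℝ) :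
    (a • (1 : Matrix n n ℝ) + b • M).det = ∏ i, (a + b * hM.eigenvalues i) := by
  have hV : (hM.eigenvectorUnitary : Matrix n n ℝ) * (star hM.eigenvectorUnitary : Matrix n n ℝ) = 1 :=
    (Matrix.mem_unitaryGroup_iff).mp hM.eigenvectorUnitary.2
  have key : a • (1 : Matrix n n ℝ) + b • M =
      (hM.eigenvectorUnitary : Matrix n n ℝ) * diagonal (fun i => a + b * hM.eigenvalues i)
        * (star hM.eigenvectorUnitary : Matrix n n ℝ) := by
    have hdiag : diagonal (fun i => a + b * hM.eigenvalues i) =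
        a • (1 : Matrix n n ℝ) + b • diagonal (RCLike.ofReal ∘ hM.eigenvalues) := by
      ext i j
      by_cases h : i = j <;> simp [diagonal_apply, h, Matrix.one_apply]
    rw [hdiag, Matrix.mul_add, Matrix.add_mul, Matrix.mul_smul, Matrix.smul_mul,
      Matrix.mul_smul, Matrix.smul_mul, Matrix.mul_one, hV]
    conv_lhs => rw [hM.spectral_theorem, Unitary.conjStarAlgAut_apply]
  rw [key, Matrix.det_mul_right_comm, hV, Matrix.one_mul, Matrix.det_diagonal]

lemma aux_det_one_add_psd {P : Matrix n n ℝ} (hP : P.PosSemidef) : 1 ≤ (1 + P).det := by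
  have h := aux_det_smul_one_add_smul hP.1 1 1
  simp only [one_smul] at h
  rw [h]
  calc (1:ℝ) = ∏ _i : n, (1:ℝ) := by simp
    _ ≤ ∏ i, (1 + 1 * hP.1.eigenvalues i) := by
        refine Finset.prod_le_prod (fun i _ => zero_le_one) fun i _ => ?_
        have := hP.eigenvalues_nonneg i
        linarith

lemma aux_logdet_one_combo {M : Matrix n n ℝ} (hM : M.PosDef) {t : ℝ}
    (ht0 : 0 ≤ t) (ht1 : t ≤ 1) :
    (1 - t) * Real.log M.det ≤ Real.log (t • (1 : Matrix n n ℝ) + (1 - t) • M).det := by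
  have h := aux_det_smul_one_add_smul hM.1 t (1 - t)
  have hpos : ∀ i, 0 < t + (1 - t) * hM.1.eigenvalues i := fun i => by
    have he := hM.eigenvalues_pos i
    rcases eq_or_lt_of_le ht0 with h | h
    · rw [← h]; simpa using he
    · have : 0 ≤ (1 - t) * hM.1.eigenvalues i := mul_nonneg (by linarith) he.le
      linarith
  rw [h, Real.log_prod (fun i _ => (hpos i).ne')]
  have hdet : M.det = ∏ i, hM.1.eigenvalues i := by
    simpa using hM.1.det_eq_prod_eigenvalues
  rw [hdet, Real.log_prod (fun i _ => (hM.eigenvalues_pos i).ne'), Finset.mul_sum]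
  refine Finset.sum_le_sum fun i _ => ?_
  have hc := (strictConcaveOn_log_Ioi.concaveOn).2 (Set.mem_Ioi.mpr one_pos)
      (Set.mem_Ioi.mpr (hM.eigenvalues_pos i)) ht0 (by linarith : (0:ℝ) ≤ 1 - t)
      (by ring : t + (1 - t) = 1)
  simpa [Real.log_one] using hc

lemma aux_det_mono {A B : Matrix n n ℝ} (hA : A.PosDef) (hBA : (B - A).PosSemidef) :
    A.det ≤ B.det := by
  set C := (open scoped MatrixOrder in CFC.sqrt A) with hCdef
  have hCpsd : C.PosSemidef := open scoped MatrixOrder in (CFC.sqrt_nonneg A).posSemidef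
  have hCC : C * C = A := open scoped MatrixOrder in CFC.sqrt_mul_sqrt_self A hA.posSemidef.nonneg
  have hdetA : 0 < A.det := hA.det_pos
  have hdetCC : C.det * C.det = A.det := by rw [← det_mul, hCC]
  have hCdet0 : C.det ≠ 0 := by
    intro h; rw [h, mul_zero] at hdetCC; exact hdetA.ne' hdetCC.symm
  have hCu : IsUnit C.det := isUnit_iff_ne_zero.2 hCdet0
  have h1 : C * C⁻¹ = 1 := mul_nonsing_inv _ hCu
  have h2 : C⁻¹ * C = 1 := nonsing_inv_mul _ hCu
  have hCsym : Cᵀ = C := by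
    rw [← conjTranspose_eq_transpose_of_trivial]; exact hCpsd.1
  have hCisym : (C⁻¹)ᵀ = C⁻¹ := by rw [transpose_nonsing_inv, hCsym]
  have hP : (C⁻¹ * (B - A) * C⁻¹).PosSemidef := by
    have := aux_psd_conj hBA C⁻¹
    rwa [hCisym] at this
  have hB : B = C * (1 + C⁻¹ * (B - A) * C⁻¹) * C := by
    have hmid : C * (C⁻¹ * (B - A) * C⁻¹) * C = (C * C⁻¹) * (B - A) * (C⁻¹ * C) := by
      simp only [Matrix.mul_assoc]
    rw [Matrix.mul_add, Matrix.mul_one, Matrix.add_mul, hCC, hmid, h1, h2,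
      Matrix.one_mul, Matrix.mul_one]
    abel
  have hdet1 : 1 ≤ (1 + C⁻¹ * (B - A) * C⁻¹).det := aux_det_one_add_psd hP
  have hdetB : B.det = C.det * (1 + C⁻¹ * (B - A) * C⁻¹).det * C.det := by
    conv_lhs => rw [hB]
    rw [det_mul, det_mul]
  nlinarith

lemma aux_logdet_concave {A B : Matrix n n ℝ} (hA : A.PosDef) (hB : B.PosDef) {t : ℝ}
    (ht0 : 0 ≤ t) (ht1 : t ≤ 1) :
    t * Real.log A.det + (1 - t) * Real.log B.det ≤ Real.log (t • A + (1 - t) • B).det := by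
  set C := (open scoped MatrixOrder in CFC.sqrt A) with hCdef
  have hCpsd : C.PosSemidef := open scoped MatrixOrder in (CFC.sqrt_nonneg A).posSemidef
  have hCC : C * C = A := open scoped MatrixOrder in CFC.sqrt_mul_sqrt_self A hA.posSemidef.nonneg
  have hdetA : 0 < A.det := hA.det_pos
  have hdetCC : C.det * C.det = A.det := by rw [← det_mul, hCC]
  have hCdet0 : C.det ≠ 0 := by
    intro h; rw [h, mul_zero] at hdetCC; exact hdetA.ne' hdetCC.symm
  have hCu : IsUnit C.det := isUnit_iff_ne_zero.2 hCdet0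
  have h1 : C * C⁻¹ = 1 := mul_nonsing_inv _ hCu
  have h2 : C⁻¹ * C = 1 := nonsing_inv_mul _ hCu
  have hCsym : Cᵀ = C := by
    rw [← conjTranspose_eq_transpose_of_trivial]; exact hCpsd.1
  have hCisym : (C⁻¹)ᵀ = C⁻¹ := by rw [transpose_nonsing_inv, hCsym]
  have hMinj : ∀ x : n → ℝ, x ≠ 0 → C⁻¹ *ᵥ x ≠ 0 := by
    intro x hx h
    apply hx
    have : C *ᵥ (C⁻¹ *ᵥ x) = x := by rw [mulVec_mulVec, h1, one_mulVec]
    rw [h, mulVec_zero] at this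
    exact this.symm
  have hM : (C⁻¹ * B * C⁻¹).PosDef := by
    have := aux_pd_conj hB C⁻¹ hMinj
    rwa [hCisym] at this
  set M := C⁻¹ * B * C⁻¹ with hMdef
  have hCMC : C * M * C = B := by
    have : C * (C⁻¹ * B * C⁻¹) * C = (C * C⁻¹) * B * (C⁻¹ * C) := by
      simp only [Matrix.mul_assoc]
    rw [hMdef, this, h1, h2, Matrix.one_mul, Matrix.mul_one]
  have hkey : t • A + (1 - t) • B = C * (t • (1 : Matrix n n ℝ) + (1 - t) • M) * C := by
    rw [Matrix.mul_add, Matrix.add_mul, Matrix.mul_smul, Matrix.smul_mul,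
      Matrix.mul_smul, Matrix.smul_mul, Matrix.mul_one, hCC, hCMC]
  have hcomboPD : (t • (1 : Matrix n n ℝ) + (1 - t) • M).PosDef :=
    aux_pd_combo Matrix.PosDef.one hM ht0 ht1
  have hdetM : M.det = B.det / A.det := by
    rw [hMdef, det_mul, det_mul, det_nonsing_inv, Ring.inverse_eq_inv', ← hdetCC]
    field_simp
  have hlogM : Real.log M.det = Real.log B.det - Real.log A.det := by
    rw [hdetM, Real.log_div hB.det_pos.ne' hdetA.ne']
  have hdetcombo : (t • A + (1 - t) • B).det =
      A.det * (t • (1 : Matrix n n ℝ) + (1 - t) • M).det := by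
    rw [hkey, det_mul, det_mul, ← hdetCC]
    ring
  rw [hdetcombo, Real.log_mul hdetA.ne' hcomboPD.det_pos.ne']
  have := aux_logdet_one_combo hM ht0 ht1
  rw [hlogM] at this
  linarith

lemma aux_schur_psd {U : Matrix n l ℝ} {S : Matrix n n ℝ} (hS : S.PosDef)
    (hK : (Uᵀ * S⁻¹ * U).PosDef) :
    (S - U * (Uᵀ * S⁻¹ * U)⁻¹ * Uᵀ).PosSemidef := by
  set K := Uᵀ * S⁻¹ * U with hKdef
  have hSu : IsUnit S.det := isUnit_iff_ne_zero.2 hS.det_pos.ne'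
  have hKu : IsUnit K.det := isUnit_iff_ne_zero.2 hK.det_pos.ne'
  have hs1 : S * S⁻¹ = 1 := mul_nonsing_inv _ hSu
  have hs2 : S⁻¹ * S = 1 := nonsing_inv_mul _ hSu
  have hk1 : K * K⁻¹ = 1 := mul_nonsing_inv _ hKu
  have hk2 : K⁻¹ * K = 1 := nonsing_inv_mul _ hKu
  have hSisym : (S⁻¹)ᵀ = S⁻¹ := by
    rw [transpose_nonsing_inv]
    congr 1
    rw [← conjTranspose_eq_transpose_of_trivial]; exact hS.1
  have hKisym : (K⁻¹)ᵀ = K⁻¹ := by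
    rw [transpose_nonsing_inv]
    congr 1
    rw [← conjTranspose_eq_transpose_of_trivial]; exact hK.1
  set N := S⁻¹ * U * K⁻¹ * Uᵀ with hNdef
  set X := U * K⁻¹ * Uᵀ with hXdef
  have hNt : Nᵀ = U * K⁻¹ * Uᵀ * S⁻¹ := by
    rw [hNdef]
    simp [Matrix.transpose_mul, hSisym, hKisym, Matrix.mul_assoc]
  have hA : S * N = X := by
    calc S * N = (S * S⁻¹) * (U * (K⁻¹ * Uᵀ)) := by
          rw [hNdef]; simp only [Matrix.mul_assoc]
      _ = X := by rw [hs1, Matrix.one_mul, hXdef]; simp only [Matrix.mul_assoc]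
  have hB : Nᵀ * S = X := by
    calc Nᵀ * S = U * (K⁻¹ * (Uᵀ * (S⁻¹ * S))) := by
          rw [hNt]; simp only [Matrix.mul_assoc]
      _ = X := by rw [hs2, Matrix.mul_one, hXdef]; simp only [Matrix.mul_assoc]
  have hC : Nᵀ * S * N = X := by
    rw [hB]
    calc X * N = U * (K⁻¹ * ((Uᵀ * S⁻¹ * U) * (K⁻¹ * Uᵀ))) := by
          rw [hXdef, hNdef]; simp only [Matrix.mul_assoc]
      _ = U * (K⁻¹ * (K * (K⁻¹ * Uᵀ))) := by rw [← hKdef]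
      _ = U * (K⁻¹ * Uᵀ) := by rw [← Matrix.mul_assoc K⁻¹ K, hk2, Matrix.one_mul]
      _ = X := by rw [hXdef]; simp only [Matrix.mul_assoc]
  have hexp : (1 - N)ᵀ * S * (1 - N) = S - (S * N) - (Nᵀ * S) + (Nᵀ * S * N) := by
    rw [Matrix.transpose_sub, Matrix.transpose_one]
    noncomm_ring
  have hfinal : (1 - N)ᵀ * S * (1 - N) = S - X := by
    rw [hexp, hC, hA, hB]; abel
  have := aux_psd_conj hS.posSemidef (1 - N)
  rw [hfinal] at this
  exact this

end AuxHelpers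



open Matrix

/-- For `U` with orthonormal columns (`Uᵀ U = I`), the function
`Sig ↦ -log det(Uᵀ Sig⁻¹ U)` is concave on positive definite matrices. -/
theorem neg_log_det_conj_inv_concave {m ℓ : ℕ}
    (U : Matrix (Fin m) (Fin ℓ) ℝ) (hU : Uᵀ * U = 1) :
    ∀ (S1 S2 : Matrix (Fin m) (Fin m) ℝ), S1.PosDef → S2.PosDef →
      ∀ t : ℝ, 0 ≤ t → t ≤ 1 →
        -Real.log (Uᵀ * (t • S1 + (1 - t) • S2)⁻¹ * U).det ≥
          t * (-Real.log (Uᵀ * S1⁻¹ * U).det) +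
          (1 - t) * (-Real.log (Uᵀ * S2⁻¹ * U).det) := by
  intro S1 S2 h1 h2 t ht0 ht1
  set St := t • S1 + (1 - t) • S2 with hStdef
  have hSt : St.PosDef := aux_pd_combo h1 h2 ht0 ht1
  have hUinj : ∀ x : Fin ℓ → ℝ, x ≠ 0 → U *ᵥ x ≠ 0 := by
    intro x hx h
    have h2' : Uᵀ *ᵥ (U *ᵥ x) = x := by rw [mulVec_mulVec, hU, one_mulVec]
    rw [h, mulVec_zero] at h2'
    exact hx h2'.symm
  set K1 := Uᵀ * S1⁻¹ * U with hK1def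
  set K2 := Uᵀ * S2⁻¹ * U with hK2def
  set Kt := Uᵀ * St⁻¹ * U with hKtdef
  have hK1 : K1.PosDef := aux_pd_conj h1.inv U hUinj
  have hK2 : K2.PosDef := aux_pd_conj h2.inv U hUinj
  have hKt : Kt.PosDef := aux_pd_conj hSt.inv U hUinj
  have hStu : IsUnit St.det := isUnit_iff_ne_zero.2 hSt.det_pos.ne'
  have hKtu : IsUnit Kt.det := isUnit_iff_ne_zero.2 hKt.det_pos.ne'
  have hst1 : St * St⁻¹ = 1 := mul_nonsing_inv _ hStu
  have hst2 : St⁻¹ * St = 1 := nonsing_inv_mul _ hStu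
  have hk1t : Kt * Kt⁻¹ = 1 := mul_nonsing_inv _ hKtu
  have hk2t : Kt⁻¹ * Kt = 1 := nonsing_inv_mul _ hKtu
  have hStisym : (St⁻¹)ᵀ = St⁻¹ := by
    rw [transpose_nonsing_inv]
    congr 1
    rw [← conjTranspose_eq_transpose_of_trivial]; exact hSt.1
  have hKtisym : (Kt⁻¹)ᵀ = Kt⁻¹ := by
    rw [transpose_nonsing_inv]
    congr 1
    rw [← conjTranspose_eq_transpose_of_trivial]; exact hKt.1
  set W := St⁻¹ * U * Kt⁻¹ with hWdef
  have hWt : Wᵀ = Kt⁻¹ * Uᵀ * St⁻¹ := by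
    rw [hWdef]
    simp [Matrix.transpose_mul, hStisym, hKtisym, Matrix.mul_assoc]
  have hWU : Wᵀ * U = 1 := by
    calc Wᵀ * U = Kt⁻¹ * (Uᵀ * St⁻¹ * U) := by
          rw [hWt]; simp only [Matrix.mul_assoc]
      _ = Kt⁻¹ * Kt := by rw [← hKtdef]
      _ = 1 := hk2t
  have hUW : Uᵀ * W = 1 := by
    have := congrArg Matrix.transpose hWU
    rwa [Matrix.transpose_mul, Matrix.transpose_transpose, Matrix.transpose_one] at this
  have hWSW : Wᵀ * St * W = Kt⁻¹ := by
    calc Wᵀ * St * W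
        = Kt⁻¹ * (Uᵀ * ((St⁻¹ * St) * (St⁻¹ * (U * Kt⁻¹)))) := by
          rw [hWt, hWdef]; simp only [Matrix.mul_assoc]
      _ = Kt⁻¹ * (Uᵀ * St⁻¹ * U * Kt⁻¹) := by
          rw [hst2, Matrix.one_mul]; simp only [Matrix.mul_assoc]
      _ = Kt⁻¹ * (Kt * Kt⁻¹) := by rw [← Matrix.mul_assoc, ← hKtdef]
      _ = Kt⁻¹ := by rw [hk1t, Matrix.mul_one]
  have hconj : ∀ Z : Matrix (Fin ℓ) (Fin ℓ) ℝ, Wᵀ * (U * Z * Uᵀ) * W = Z := by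
    intro Z
    calc Wᵀ * (U * Z * Uᵀ) * W = (Wᵀ * U) * (Z * (Uᵀ * W)) := by
          simp only [Matrix.mul_assoc]
      _ = Z := by rw [hWU, hUW, Matrix.one_mul, Matrix.mul_one]
  have hP1eq : Wᵀ * (S1 - U * K1⁻¹ * Uᵀ) * W = Wᵀ * S1 * W - K1⁻¹ := by
    rw [Matrix.mul_sub, Matrix.sub_mul, hconj K1⁻¹]
  have hP2eq : Wᵀ * (S2 - U * K2⁻¹ * Uᵀ) * W = Wᵀ * S2 * W - K2⁻¹ := by
    rw [Matrix.mul_sub, Matrix.sub_mul, hconj K2⁻¹]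
  have hP1 : (Wᵀ * S1 * W - K1⁻¹).PosSemidef := by
    rw [← hP1eq]; exact aux_psd_conj (aux_schur_psd h1 hK1) W
  have hP2 : (Wᵀ * S2 * W - K2⁻¹).PosSemidef := by
    rw [← hP2eq]; exact aux_psd_conj (aux_schur_psd h2 hK2) W
  have hsum : t • (Wᵀ * S1 * W) + (1 - t) • (Wᵀ * S2 * W) = Kt⁻¹ := by
    rw [← hWSW, hStdef, Matrix.mul_add, Matrix.add_mul, Matrix.mul_smul, Matrix.smul_mul,
      Matrix.mul_smul, Matrix.smul_mul]
  have hD : (Kt⁻¹ - (t • K1⁻¹ + (1 - t) • K2⁻¹)).PosSemidef := by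
    have h := (aux_psd_smul hP1 ht0).add (aux_psd_smul hP2 (by linarith : (0:ℝ) ≤ 1 - t))
    have heq : Kt⁻¹ - (t • K1⁻¹ + (1 - t) • K2⁻¹) =
        t • (Wᵀ * S1 * W - K1⁻¹) + (1 - t) • (Wᵀ * S2 * W - K2⁻¹) := by
      rw [smul_sub, smul_sub, ← hsum]; abel
    rw [heq]; exact h
  have hKc : (t • K1⁻¹ + (1 - t) • K2⁻¹).PosDef := aux_pd_combo hK1.inv hK2.inv ht0 ht1
  have hdetle : (t • K1⁻¹ + (1 - t) • K2⁻¹).det ≤ (Kt⁻¹).det := aux_det_mono hKc hD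
  have hlog1 : t * Real.log (K1⁻¹).det + (1 - t) * Real.log (K2⁻¹).det ≤
      Real.log (Kt⁻¹).det := by
    refine le_trans (aux_logdet_concave hK1.inv hK2.inv ht0 ht1) ?_
    exact Real.log_le_log hKc.det_pos hdetle
  rw [det_nonsing_inv, det_nonsing_inv, det_nonsing_inv] at hlog1
  simp only [Ring.inverse_eq_inv', Real.log_inv] at hlog1
  linarith
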